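/- Let x be a positive integer, t ≥ 1, and suppose T^j applied to x has a fixed parity pattern for j < t. If P ≡ 0 (mod 2^t), then T^t(x + P) = T^t(x) + 3^c · (P / 2^t), where c is the number of j < t with T^j(x) odd. In particular T^t(x + m·2^t) = T^t(x) + 3^c · m for every positive integer m. -/

import Mathlib

def T (x : ℕ) : ℕ := if x % 2 = 0 then x / 2 else (3 * x + 1) / 2

lemma card_filter_succ (x t : ℕ) :
    ((Finset.range (t+1)).filter (fun j => Odd (T^[j] x))).card
      = ((Finset.range t).filter (fun j => Odd (T^[j] (T x)))).card
        + (if Odd x then 1 else 0) := by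
  induction t with
  | zero =>
    simp [Finset.range_one, Finset.filter_singleton]
    by_cases h : Odd x <;> simp [h]
  | succ n ih =>
    have hcomm : T^[n+1] x = T^[n] (T x) := Function.iterate_succ_apply T n x
    conv_lhs => rw [Finset.range_add_one, Finset.filter_insert]
    conv_rhs => rw [Finset.range_add_one, Finset.filter_insert]
    by_cases h : Odd (T^[n] (T x))
    · rw [if_pos (by rw [hcomm]; exact h), if_pos h,
        Finset.card_insert_of_notMem (by simp),
        Finset.card_insert_of_notMem (by simp), ih]
      ring
    · rw [if_neg (by rw [hcomm]; exact h), if_neg h, ih]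

lemma T_shift (x q : ℕ) :
    T (x + 2 * q) = T x + (if Odd x then 3 else 1) * q := by
  simp only [T, Nat.odd_iff]
  split_ifs <;> omega

lemma key (t : ℕ) : ∀ x q : ℕ,
    T^[t] (x + 2 ^ t * q) =
      T^[t] x + 3 ^ (((Finset.range t).filter (fun j => Odd (T^[j] x))).card) * q := by
  induction t with
  | zero => simp
  | succ n ih =>
    intro x q
    have h1 : x + 2 ^ (n+1) * q = x + 2 * (2 ^ n * q) := by ring
    rw [Function.iterate_succ_apply, Function.iterate_succ_apply, h1, T_shift,
      card_filter_succ]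
    by_cases ho : Odd x
    · rw [if_pos ho]
      have : (3:ℕ) * (2 ^ n * q) = 2 ^ n * (3 * q) := by ring
      rw [this, ih, if_pos ho]
      ring
    · rw [if_neg ho, one_mul, ih, if_neg ho]
      ring

theorem stmt_9 (x t : ℕ) (hx : 0 < x) (ht : 1 ≤ t) :
    (∀ P : ℕ, 0 < P → 2 ^ t ∣ P →
      T^[t] (x + P) =
        T^[t] x + 3 ^ (((Finset.range t).filter (fun j => Odd (T^[j] x))).card) * (P / 2 ^ t)) ∧
    (∀ m : ℕ, 0 < m →
      T^[t] (x + m * 2 ^ t) =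
        T^[t] x + 3 ^ (((Finset.range t).filter (fun j => Odd (T^[j] x))).card) * m) := by
  constructor
  · intro P _ hdvd
    obtain ⟨q, rfl⟩ := hdvd
    rw [Nat.mul_div_cancel_left q (by positivity), key]
  · intro m _
    have : x + m * 2 ^ t = x + 2 ^ t * m := by ring
    rw [this, key]
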